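/- The coamoeba of H, i.e. the image of H under (x,y,φ,ψ)↦(φ,ψ), equals T₁ ∪ T₂ ∪ {(0,π),(π,0),(π,π)}, where T₁ = {(φ,ψ): 0<φ<π, π<ψ<φ+π} and T₂ = {(φ,ψ): π<φ<2π, φ−π<ψ<π}. -/

import Mathlib

open Real Complex


private lemma lt_pi_of_sin_pos {t : ℝ} (h2 : t < 2*π) (hs : 0 < Real.sin t) : t < π := by
  by_contra h
  push_neg at h
  have h1 : 0 ≤ Real.sin (t - π) := Real.sin_nonneg_of_nonneg_of_le_pi (by linarith) (by linarith)
  rw [Real.sin_sub_pi] at h1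
  linarith

private lemma eq_zero_or_pi {t : ℝ} (h0 : 0 ≤ t) (h2 : t < 2*π) (hs : Real.sin t = 0) :
    t = 0 ∨ t = π := by
  rw [Real.sin_eq_zero_iff] at hs
  obtain ⟨n, hn⟩ := hs
  have hπ := Real.pi_pos
  have hn0 : 0 ≤ n := by
    by_contra h; push_neg at h
    have hR : (n:ℝ) < 0 := by exact_mod_cast h
    nlinarith
  have hn2 : n < 2 := by
    by_contra h; push_neg at h
    have hR : (2:ℝ) ≤ (n:ℝ) := by exact_mod_cast h
    nlinarith
  interval_cases n
  · left; simpa using hn.symm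
  · right; simpa using hn.symm

private lemma my_exp_eq (x φ : ℝ) :
    Complex.exp (x + φ * Complex.I) =
      ((Real.exp x * Real.cos φ : ℝ) : ℂ) + ((Real.exp x * Real.sin φ : ℝ) : ℂ) * Complex.I := by
  rw [Complex.exp_add, Complex.exp_mul_I, ← Complex.ofReal_exp, ← Complex.ofReal_cos,
    ← Complex.ofReal_sin]
  push_cast
  ring

private lemma exists_of_rs {φ ψ r s : ℝ} (hr : 0 < r) (hs : 0 < s)
    (h1 : r * Real.cos φ + s * Real.cos ψ + 1 = 0)
    (h2 : r * Real.sin φ + s * Real.sin ψ = 0) :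
    ∃ x y : ℝ, Complex.exp (x + φ * Complex.I) + Complex.exp (y + ψ * Complex.I) + 1 = 0 := by
  refine ⟨Real.log r, Real.log s, ?_⟩
  rw [my_exp_eq, my_exp_eq, Real.exp_log hr, Real.exp_log hs, Complex.ext_iff]
  constructor <;> simp [Complex.cos_ofReal_re, Complex.sin_ofReal_re] <;> linarith

private lemma rs_of_exists {φ ψ x y : ℝ}
    (h : Complex.exp (x + φ * Complex.I) + Complex.exp (y + ψ * Complex.I) + 1 = 0) :
    ∃ r s : ℝ, 0 < r ∧ 0 < s ∧ r * Real.cos φ + s * Real.cos ψ + 1 = 0 ∧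
      r * Real.sin φ + s * Real.sin ψ = 0 := by
  refine ⟨Real.exp x, Real.exp y, Real.exp_pos x, Real.exp_pos y, ?_, ?_⟩
  · have := congrArg Complex.re h
    rw [my_exp_eq, my_exp_eq] at this
    simpa [Complex.exp_ofReal_re, Complex.cos_ofReal_re, Complex.sin_ofReal_re] using this
  · have := congrArg Complex.im h
    rw [my_exp_eq, my_exp_eq] at this
    simpa [Complex.exp_ofReal_re, Complex.cos_ofReal_re, Complex.sin_ofReal_re] using this

theorem stmt_6 :
    {p : ℝ × ℝ | ∃ x y : ℝ, p.1 ∈ Set.Ico 0 (2 * π) ∧ p.2 ∈ Set.Ico 0 (2 * π) ∧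
        Complex.exp (x + p.1 * Complex.I) + Complex.exp (y + p.2 * Complex.I) + 1 = 0}
      = {p : ℝ × ℝ | 0 < p.1 ∧ p.1 < π ∧ π < p.2 ∧ p.2 < p.1 + π}
        ∪ {p : ℝ × ℝ | π < p.1 ∧ p.1 < 2 * π ∧ p.1 - π < p.2 ∧ p.2 < π}
        ∪ {((0 : ℝ), π), (π, (0 : ℝ)), (π, π)} := by
  have hπ := Real.pi_pos
  ext ⟨φ, ψ⟩
  simp only [Set.mem_setOf_eq, Set.mem_union, Set.mem_insert_iff, Set.mem_singleton_iff,
    Set.mem_Ico, Prod.mk.injEq]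
  constructor
  · rintro ⟨x, y, ⟨hφ0, hφ2⟩, ⟨hψ0, hψ2⟩, heq⟩
    obtain ⟨r, s, hr, hs, h1, h2⟩ := rs_of_exists heq
    have key1 : r * Real.sin (ψ - φ) = -Real.sin ψ := by
      rw [Real.sin_sub]
      linear_combination Real.sin ψ * h1 - Real.cos ψ * h2
    rcases lt_trichotomy (Real.sin φ) 0 with hsφ | hsφ | hsφ
    · -- π < φ < 2π, case T2
      have hφπ : π < φ := by
        by_contra h; push_neg at h
        exact absurd (Real.sin_nonneg_of_nonneg_of_le_pi hφ0 h) (by linarith)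
      have hsψ : 0 < Real.sin ψ := by nlinarith
      have hψπ : ψ < π := lt_pi_of_sin_pos hψ2 hsψ
      have hψ0' : 0 < ψ := by
        rcases lt_or_eq_of_le hψ0 with h | h
        · exact h
        · rw [← h] at hsψ; simp at hsψ
      have hd : Real.sin (ψ - φ) < 0 := by nlinarith
      have hfψ : φ - π < ψ := by
        by_contra h; push_neg at h
        have h5 : 0 ≤ Real.sin (φ - ψ - π) :=
          Real.sin_nonneg_of_nonneg_of_le_pi (by linarith) (by linarith)
        rw [Real.sin_sub_pi] at h5
        have h7 : Real.sin (φ - ψ) = -Real.sin (ψ - φ) := by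
          rw [show φ - ψ = -(ψ - φ) by ring, Real.sin_neg]
        linarith
      exact Or.inl (Or.inr ⟨hφπ, hφ2, hfψ, hψπ⟩)
    · -- sin φ = 0
      have hzψ : Real.sin ψ = 0 := by
        have h2' := h2
        rw [hsφ, mul_zero, zero_add] at h2'
        rcases mul_eq_zero.1 h2' with h | h
        · exact absurd h (ne_of_gt hs)
        · exact h
      rcases eq_zero_or_pi hφ0 hφ2 hsφ with hφ | hφ <;>
        rcases eq_zero_or_pi hψ0 hψ2 hzψ with hψ | hψ
      · exfalso
        rw [hφ, hψ, Real.cos_zero] at h1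
        linarith
      · exact Or.inr (Or.inl ⟨hφ, hψ⟩)
      · exact Or.inr (Or.inr (Or.inl ⟨hφ, hψ⟩))
      · exact Or.inr (Or.inr (Or.inr ⟨hφ, hψ⟩))
    · -- 0 < φ < π, case T1
      have hφπ : φ < π := lt_pi_of_sin_pos hφ2 hsφ
      have hφ0' : 0 < φ := by
        rcases lt_or_eq_of_le hφ0 with h | h
        · exact h
        · rw [← h] at hsφ; simp at hsφ
      have hsψ : Real.sin ψ < 0 := by nlinarith
      have hψπ : π < ψ := by
        by_contra h; push_neg at h
        exact absurd (Real.sin_nonneg_of_nonneg_of_le_pi hψ0 h) (by linarith)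
      have hd : 0 < Real.sin (ψ - φ) := by nlinarith
      have hfψ : ψ < φ + π := by
        have := lt_pi_of_sin_pos (t := ψ - φ) (by linarith) hd
        linarith
      exact Or.inl (Or.inl ⟨hφ0', hφπ, hψπ, hfψ⟩)
  · rintro ((⟨h1, h2, h3, h4⟩ | ⟨h1, h2, h3, h4⟩) | (⟨h1, h2⟩ | ⟨h1, h2⟩ | ⟨h1, h2⟩))
    · -- T1
      have hsφ : 0 < Real.sin φ := Real.sin_pos_of_pos_of_lt_pi h1 h2
      have hD : 0 < Real.sin (ψ - φ) :=
        Real.sin_pos_of_pos_of_lt_pi (by linarith) (by linarith)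
      have hsψ : Real.sin ψ < 0 := by
        have : 0 < Real.sin (ψ - π) :=
          Real.sin_pos_of_pos_of_lt_pi (by linarith) (by linarith)
        rw [Real.sin_sub_pi] at this
        linarith
      obtain ⟨x, y, hxy⟩ := exists_of_rs (φ := φ) (ψ := ψ)
        (r := -Real.sin ψ / Real.sin (ψ - φ)) (s := Real.sin φ / Real.sin (ψ - φ))
        (div_pos (by linarith) hD) (div_pos hsφ hD)
        (by
          rw [div_mul_eq_mul_div, div_mul_eq_mul_div, ← add_div]
          rw [div_add' _ _ _ (ne_of_gt hD), div_eq_zero_iff]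
          left
          rw [Real.sin_sub]
          ring)
        (by
          rw [div_mul_eq_mul_div, div_mul_eq_mul_div, ← add_div, div_eq_zero_iff]
          left; ring)
      exact ⟨x, y, ⟨le_of_lt (by linarith), by linarith⟩, ⟨by linarith, by linarith⟩, hxy⟩
    · -- T2
      have hsφ : Real.sin φ < 0 := by
        have : 0 < Real.sin (φ - π) :=
          Real.sin_pos_of_pos_of_lt_pi (by linarith) (by linarith)
        rw [Real.sin_sub_pi] at this
        linarith
      have hsψ : 0 < Real.sin ψ := Real.sin_pos_of_pos_of_lt_pi (by linarith) h4
      have hD : Real.sin (ψ - φ) < 0 := by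
        have : 0 < Real.sin (φ - ψ) :=
          Real.sin_pos_of_pos_of_lt_pi (by linarith) (by linarith)
        rw [show φ - ψ = -(ψ - φ) by ring, Real.sin_neg] at this
        linarith
      obtain ⟨x, y, hxy⟩ := exists_of_rs (φ := φ) (ψ := ψ)
        (r := -Real.sin ψ / Real.sin (ψ - φ)) (s := Real.sin φ / Real.sin (ψ - φ))
        (div_pos_of_neg_of_neg (by linarith) hD) (div_pos_of_neg_of_neg hsφ hD)
        (by
          rw [div_mul_eq_mul_div, div_mul_eq_mul_div, ← add_div]
          rw [div_add' _ _ _ (ne_of_lt hD), div_eq_zero_iff]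
          left
          rw [Real.sin_sub]
          ring)
        (by
          rw [div_mul_eq_mul_div, div_mul_eq_mul_div, ← add_div, div_eq_zero_iff]
          left; ring)
      exact ⟨x, y, ⟨by linarith, by linarith⟩, ⟨by linarith, by linarith⟩, hxy⟩
    · -- (0, π)
      subst h1; subst h2
      obtain ⟨x, y, hxy⟩ := exists_of_rs (φ := 0) (ψ := π) (r := 1) (s := 2)
        one_pos two_pos (by norm_num [Real.cos_zero, Real.cos_pi, Real.sin_pi])
        (by norm_num [Real.sin_zero, Real.sin_pi])
      exact ⟨x, y, ⟨le_refl 0, by linarith⟩, ⟨by linarith, by linarith⟩, hxy⟩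
    · -- (π, 0)
      subst h1; subst h2
      obtain ⟨x, y, hxy⟩ := exists_of_rs (φ := π) (ψ := 0) (r := 2) (s := 1)
        two_pos one_pos (by norm_num [Real.cos_zero, Real.cos_pi, Real.sin_pi])
        (by norm_num [Real.sin_zero, Real.sin_pi])
      exact ⟨x, y, ⟨by linarith, by linarith⟩, ⟨le_refl 0, by linarith⟩, hxy⟩
    · -- (π, π)
      subst h1; subst h2
      obtain ⟨x, y, hxy⟩ := exists_of_rs (φ := π) (ψ := π) (r := 1/2) (s := 1/2)
        (by norm_num) (by norm_num) (by norm_num [Real.cos_pi])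
        (by norm_num [Real.sin_pi])
      exact ⟨x, y, ⟨by linarith, by linarith⟩, ⟨by linarith, by linarith⟩, hxy⟩
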